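/- arXiv:2102.05993 — 6 statements merged into one kernel-verified Lean document; each statement's English description precedes it below -/
import Mathlib

section
/- Let f : A → B and g : B → C be homomorphisms of commutative rings and set h = g ∘ f. Assume C is faithfully flat as an A-module via h. Let I ⊆ A and J ⊆ B be ideals such that the extension of J to C is contained in the extension of I to C, i.e. J·C ⊆ (I·C) where J·C is generated by g(J) and I·C by h(I). Then every x ∈ A with f(x) ∈ J² satisfies x ∈ I². In particular, if moreover f(I) ⊆ J, then the induced map I/I² → J/J² is injective. -/
/-- Faithfully flat descent of ideal membership: if `C` is a faithfully flat
`A`-algebra and `x` lands in `K·C`, then `x ∈ K`. -/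
theorem ff_comap_map {A C : Type*} [CommRing A] [CommRing C] [Algebra A C]
    [Module.FaithfullyFlat A C] (K : Ideal A) (x : A)
    (hx : algebraMap A C x ∈ K.map (algebraMap A C)) : x ∈ K := by
  have hxq : (Ideal.Quotient.mk K x : A ⧸ K) = 0 := by
    have hf : (LinearMap.toSpanSingleton A (A ⧸ K)
        (Ideal.Quotient.mk K x : A ⧸ K)) = 0 := by
      rw [Module.FaithfullyFlat.zero_iff_rTensor_zero A C]
      apply TensorProduct.ext'
      intro a c
      show (a • (Ideal.Quotient.mk K x : A ⧸ K)) ⊗ₜ[A] c = 0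
      have hsm : a • (Ideal.Quotient.mk K x : A ⧸ K) = Ideal.Quotient.mk K (a * x) := by
        rw [← smul_eq_mul]
        exact (Submodule.Quotient.mk_smul K a x).symm
      rw [hsm, ← (TensorProduct.quotTensorEquivQuotSMul C K).map_eq_zero_iff,
        TensorProduct.quotTensorEquivQuotSMul_mk_tmul,
        Submodule.Quotient.mk_eq_zero, Ideal.smul_top_eq_map,
        Submodule.restrictScalars_mem]
      have : (a * x) • c = algebraMap A C (a * x) * c := Algebra.smul_def _ _
      rw [this, map_mul]
      exact Ideal.mul_mem_right _ _ (Ideal.mul_mem_left _ _ hx)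
    have := congrArg (fun φ => φ 1) hf
    simpa using this
  rwa [Ideal.Quotient.eq_zero_iff_mem] at hxq

/-- Let `f : A → B` and `g : B → C` be homomorphisms of commutative rings with
`h = g ∘ f`, and suppose `C` is faithfully flat as an `A`-module via `h`.
If `I ⊆ A` and `J ⊆ B` are ideals with `J·C ⊆ I·C`, then every `x ∈ A` with
`f x ∈ J²` satisfies `x ∈ I²`.  In particular, if moreover `f(I) ⊆ J`, the
induced map `I/I² → J/J²` is injective. -/
theorem stmt0 {A B C : Type*} [CommRing A] [CommRing B] [CommRing C]
    (f : A →+* B) (g : B →+* C) [Algebra A C]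
    (hAC : algebraMap A C = g.comp f)
    [Module.FaithfullyFlat A C]
    (I : Ideal A) (J : Ideal B)
    (hJI : J.map g ≤ I.map (g.comp f)) :
    (∀ x : A, f x ∈ J ^ 2 → x ∈ I ^ 2) ∧
      (Ideal.map f I ≤ J → ∀ x ∈ I, f x ∈ J ^ 2 → x ∈ I ^ 2) := by
  have main : ∀ x : A, f x ∈ J ^ 2 → x ∈ I ^ 2 := by
    intro x hx
    apply ff_comap_map (C := C) (I ^ 2) x
    rw [hAC]
    have h1 : g (f x) ∈ (J ^ 2).map g := Ideal.mem_map_of_mem g hx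
    have h2 : (J ^ 2).map g ≤ (J.map g) ^ 2 := by
      rw [pow_two, pow_two, Ideal.map_mul]
    have h3 : (J.map g) ^ 2 ≤ (I.map (g.comp f)) ^ 2 := by
      exact Ideal.pow_right_mono hJI 2
    have h4 : (I.map (g.comp f)) ^ 2 ≤ (I ^ 2).map (g.comp f) := by
      rw [pow_two, pow_two, Ideal.map_mul]
    have : (g.comp f) x ∈ (I ^ 2).map (g.comp f) := h4 (h3 (h2 h1))
    simpa using this
  exact ⟨main, fun _ x _ hx => main x hx⟩
end

section
/- Let A be a Noetherian integrally closed (normal) integral domain, B an integral domain, and f : A → B an injective ring homomorphism such that the induced map Spec B → Spec A is surjective, i.e. every prime ideal of A is of the form f⁻¹(q) for some prime ideal q of B. Let σ be an element of the fraction field Frac(A). If the image of σ under the induced embedding Frac(A) → Frac(B) lies in B, then σ ∈ A. -/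
/-- Let `A` be a Noetherian integrally closed domain, `B` a domain, and
`f : A → B` an injective ring homomorphism such that `Spec B → Spec A` is
surjective (every prime of `A` is the contraction of a prime of `B`).
If `σ ∈ Frac(A)` maps into `B ⊆ Frac(B)` under the induced embedding
`Frac(A) → Frac(B)`, then `σ ∈ A`. -/
theorem stmt1 {A B : Type*} [CommRing A] [IsDomain A] [IsNoetherianRing A]
    [IsIntegrallyClosed A] [CommRing B] [IsDomain B]
    (f : A →+* B) (hf : Function.Injective f)
    (hsurj : ∀ p : Ideal A, p.IsPrime → ∃ q : Ideal B, q.IsPrime ∧ q.comap f = p)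
    (φ : FractionRing A →+* FractionRing B)
    (hφ : φ.comp (algebraMap A (FractionRing A)) =
      (algebraMap B (FractionRing B)).comp f)
    (σ : FractionRing A)
    (hσ : φ σ ∈ (algebraMap B (FractionRing B)).range) :
    σ ∈ (algebraMap A (FractionRing A)).range := by
  classical
  by_contra hσA
  -- the denominator ideal of σ
  set I : Ideal A := (1 : Submodule A (FractionRing A)).colon (Submodule.span A {σ}) with hI
  have hmemI : ∀ x : A, x ∈ I ↔
      ∃ a : A, algebraMap A (FractionRing A) a = algebraMap A (FractionRing A) x * σ := by
    intro x
    rw [hI, Submodule.mem_colon_span_singleton, Algebra.smul_def, Submodule.mem_one]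
  have hItop : I ≠ ⊤ := by
    intro h
    have h1 : (1 : A) ∈ I := h ▸ Submodule.mem_top
    obtain ⟨a, ha⟩ := (hmemI 1).mp h1
    exact hσA ⟨a, by simpa using ha⟩
  have hIbot : I ≠ ⊥ := by
    obtain ⟨⟨a, b⟩, hab⟩ := IsLocalization.surj (nonZeroDivisors A) σ
    intro h
    have hbI : (b : A) ∈ I := (hmemI b).mpr ⟨a, by rw [← hab]; ring⟩
    rw [h, Submodule.mem_bot] at hbI
    exact nonZeroDivisors.coe_ne_zero b hbI
  -- take an associated prime of A ⧸ I
  haveI : Nontrivial (A ⧸ I) := Ideal.Quotient.nontrivial_iff.mpr hItop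
  obtain ⟨p, hp⟩ := associatedPrimes.nonempty A (A ⧸ I)
  obtain ⟨hprime, x, hx⟩ := isAssociatedPrime_iff.mp hp
  obtain ⟨c, rfl⟩ := Ideal.Quotient.mk_surjective x
  have hmemp : ∀ y : A, y ∈ p ↔ y * c ∈ I := by
    intro y
    rw [hx, Submodule.mem_colon_singleton, Submodule.mem_bot]
    have : y • (Ideal.Quotient.mk I c) = Ideal.Quotient.mk I (y * c) := by
      rw [map_mul]
      rw [show y • (Ideal.Quotient.mk I c) = algebraMap A (A ⧸ I) y * Ideal.Quotient.mk I c from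
        Algebra.smul_def y _, Ideal.Quotient.algebraMap_eq]
    rw [this, Ideal.Quotient.eq_zero_iff_mem]
  have hcI : c ∉ I := by
    intro hc
    apply hprime.ne_top
    ext y
    simp only [Submodule.mem_top, iff_true]
    exact (hmemp y).mpr (I.mul_mem_left y hc)
  have hIlep : I ≤ p := fun y hy => (hmemp y).mpr (I.mul_mem_right c hy)
  have hpbot : p ≠ ⊥ := fun h => hIbot (le_bot_iff.mp (h ▸ hIlep))
  set τ : FractionRing A := algebraMap A (FractionRing A) c * σ with hτ
  have hmemp' : ∀ y : A, y ∈ p ↔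
      ∃ u : A, algebraMap A (FractionRing A) u = algebraMap A (FractionRing A) y * τ := by
    intro y
    rw [hmemp, hmemI, map_mul, hτ, mul_assoc]
  by_cases hcase : ∀ y ∈ p, ∃ u ∈ p,
      algebraMap A (FractionRing A) u = algebraMap A (FractionRing A) y * τ
  · -- τ • p ⊆ p, so τ is integral over A, hence in A; contradiction with c ∉ I
    set N : Submodule A (FractionRing A) :=
      Submodule.map (Algebra.linearMap A (FractionRing A)) p with hN
    have hmapbot : N ≠ ⊥ := by
      intro h
      apply hpbot
      rw [eq_bot_iff]
      intro y hy
      have h0 : algebraMap A (FractionRing A) y = 0 := by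
        have hmem := Submodule.mem_map_of_mem (f := Algebra.linearMap A (FractionRing A)) hy
        rw [← hN, h] at hmem
        simpa using hmem
      simpa using (IsFractionRing.injective A (FractionRing A)) (by simpa using h0)
    have hint : IsIntegral A τ := by
      refine isIntegral_of_smul_mem_submodule (R := A) (A := FractionRing A)
        (M := FractionRing A) N hmapbot
        ((isNoetherian_def.mp inferInstance p).map (Algebra.linearMap A (FractionRing A))) τ ?_
      rintro n hn
      obtain ⟨y, hy, rfl⟩ := Submodule.mem_map.mp hn
      obtain ⟨u, hu, huy⟩ := hcase y hy
      refine Submodule.mem_map.mpr ⟨u, hu, ?_⟩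
      simp only [Algebra.linearMap_apply] at *
      rw [huy, smul_eq_mul, mul_comm]
    obtain ⟨a, ha⟩ := IsIntegrallyClosed.isIntegral_iff.mp hint
    exact hcI ((hmemI c).mpr ⟨a, by rw [ha, hτ]⟩)
  · -- otherwise there is y ∈ p with yτ = u ∉ p; contradict lying over
    push_neg at hcase
    obtain ⟨y, hy, hbad⟩ := hcase
    obtain ⟨u, hu⟩ := (hmemp' y).mp hy
    have hup : u ∉ p := fun h => hbad u h hu
    obtain ⟨q, hq, hqp⟩ := hsurj p hprime
    obtain ⟨b0, hb0⟩ := hσ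
    have hφa : ∀ z : A, φ (algebraMap A (FractionRing A) z) =
        algebraMap B (FractionRing B) (f z) := fun z => RingHom.congr_fun hφ z
    -- apply φ to the equation
    have key : algebraMap B (FractionRing B) (f u) =
        algebraMap B (FractionRing B) (f y * (f c * b0)) := by
      have h2 := congrArg φ hu
      rw [hτ, map_mul, map_mul, hφa, hφa, hφa, ← hb0] at h2
      rw [h2, map_mul, map_mul]
    have keyB : f u = f y * (f c * b0) := IsFractionRing.injective B (FractionRing B) key
    have hfyq : f y ∈ q := by rw [← hqp] at hy; exact hy
    have hfu : f u ∈ q := keyB ▸ q.mul_mem_right _ hfyq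
    exact hup (hqp ▸ (Ideal.mem_comap.mpr hfu))
end

section
/- Let R and S be commutative rings, ι a finite index set, and (χ_i)_{i∈ι} a family of ring homomorphisms R → S such that for all i ≠ j in ι there exists x ∈ R with χ_i(x) − χ_j(x) a unit of S. Let M be the free S-module with basis (e_i)_{i∈ι} (i.e. M = ι → S), made into an R-module by x · e_i = χ_i(x) · e_i, extended S-linearly. Then every S-linear endomorphism φ of M that commutes with the R-action is diagonal: for every i ∈ ι, φ(e_i) ∈ S · e_i. -/
/-- Let `R`, `S` be commutative rings, `ι` a finite index set, and `χ i : R → S`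
ring homomorphisms such that for `i ≠ j` there is `x ∈ R` with `χ i x - χ j x`
a unit of `S`.  Make the free `S`-module `M = ι → S` into an `R`-module by
`x · e_i = χ i x · e_i`.  Then every `S`-linear endomorphism `φ` of `M`
commuting with the `R`-action is diagonal: `φ e_i ∈ S · e_i` for every `i`. -/
theorem stmt2 {R S : Type*} [CommRing R] [CommRing S] {ι : Type*} [Fintype ι] [DecidableEq ι]
    (χ : ι → (R →+* S))
    (hsep : ∀ i j : ι, i ≠ j → ∃ x : R, IsUnit (χ i x - χ j x))
    (φ : (ι → S) →ₗ[S] (ι → S))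
    (hφ : ∀ (x : R) (v : ι → S), φ (fun i => χ i x * v i) = fun i => χ i x * φ v i) :
    ∀ i : ι, φ (Pi.single i 1) ∈ Submodule.span S {Pi.single i (1 : S)} := by
  intro i
  have key : ∀ j : ι, j ≠ i → φ (Pi.single i 1) j = 0 := by
    intro j hj
    obtain ⟨x, hx⟩ := hsep i j (Ne.symm hj)
    have h1 : (fun k => χ k x * (Pi.single i (1 : S) : ι → S) k) = χ i x • (Pi.single i (1 : S) : ι → S) := by
      funext k
      by_cases hk : k = i
      · subst hk; simp
      · simp [Pi.single_apply, hk]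
    have h2 := congrFun (hφ x (Pi.single i 1)) j
    rw [h1, map_smul] at h2
    have h3 : (χ i x - χ j x) * φ (Pi.single i 1) j = 0 := by
      have : χ i x * φ (Pi.single i 1) j = χ j x * φ (Pi.single i 1) j := h2
      ring_nf
      ring_nf at this
      linear_combination this
    exact (hx.mul_right_eq_zero).mp h3
  rw [Submodule.mem_span_singleton]
  refine ⟨φ (Pi.single i 1) i, ?_⟩
  funext k
  by_cases hk : k = i
  · subst hk; simp
  · simp [Pi.single_apply, hk, key k hk]
end

section
/- Let p be a prime, n ≥ 1, κ a finite field of characteristic p, and k a perfect field of characteristic p. If τ, τ′ : κ → k are distinct ring homomorphisms, then there exists x ∈ W_n(κ) such that W_n(τ)(x) − W_n(τ′)(x) is a unit of W_n(k). -/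
/-- The ring homomorphism on truncated Witt vectors induced functorially by a
ring homomorphism `f : R →+* S` (acting coordinatewise). -/
noncomputable def TruncatedWittVector.mapRingHom {p : ℕ} [Fact p.Prime] (n : ℕ)
    {R S : Type*} [CommRing R] [CommRing S] (f : R →+* S) :
    TruncatedWittVector p n R →+* TruncatedWittVector p n S :=
  RingHom.liftOfRightInverse (WittVector.truncate n) TruncatedWittVector.out
    TruncatedWittVector.truncateFun_out
    ⟨(WittVector.truncate n).comp (WittVector.map f), by
      intro x hx
      rw [WittVector.mem_ker_truncate] at hx
      rw [RingHom.mem_ker, RingHom.comp_apply, ← RingHom.mem_ker,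
        WittVector.mem_ker_truncate]
      intro i hi
      rw [WittVector.map_coeff, hx i hi, map_zero]⟩

/-- Let `p` be a prime, `n ≥ 1`, `κ` a finite field of characteristic `p` and
`k` a perfect field of characteristic `p`.  If `τ, τ' : κ → k` are distinct
ring homomorphisms, then there exists `x ∈ W_n(κ)` such that
`W_n(τ)(x) - W_n(τ')(x)` is a unit of `W_n(k)`. -/
theorem stmt3 (p n : ℕ) [Fact p.Prime] (hn : 1 ≤ n)
    {κ k : Type*} [Field κ] [Fintype κ] [CharP κ p]
    [Field k] [CharP k p] [PerfectField k]
    (τ τ' : κ →+* k) (hττ' : τ ≠ τ') :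
    ∃ x : TruncatedWittVector p n κ,
      IsUnit (TruncatedWittVector.mapRingHom n τ x -
        TruncatedWittVector.mapRingHom n τ' x) := by
  obtain ⟨a, ha⟩ : ∃ a, τ a ≠ τ' a := by
    by_contra h
    push_neg at h
    exact hττ' (RingHom.ext h)
  refine ⟨WittVector.truncate n (WittVector.teichmuller p a), ?_⟩
  have h1 : ∀ σ : κ →+* k, TruncatedWittVector.mapRingHom n σ
      (WittVector.truncate n (WittVector.teichmuller p a))
      = WittVector.truncate n (WittVector.map σ (WittVector.teichmuller p a)) := by
    intro σ
    exact RingHom.liftOfRightInverse_comp_apply _ _ _ _ _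
  rw [h1 τ, h1 τ', ← map_sub]
  apply IsUnit.map
  apply WittVector.isUnit_of_coeff_zero_ne_zero
  have h2 : ((WittVector.map τ (WittVector.teichmuller p a)) -
      WittVector.map τ' (WittVector.teichmuller p a)).coeff 0 = τ a - τ' a := by
    have := map_sub (WittVector.constantCoeff : WittVector p k →+* k)
      (WittVector.map τ (WittVector.teichmuller p a))
      (WittVector.map τ' (WittVector.teichmuller p a))
    simpa [WittVector.constantCoeff_apply, WittVector.map_teichmuller,
      WittVector.teichmuller_coeff_zero] using this
  rw [h2]
  exact sub_ne_zero_of_ne ha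
end

section
/- Fix a prime p and integers m, n ≥ 1. Let κ = 𝔽_{p^m} and let k be an algebraically closed field of characteristic p. With M(f)_n as defined in the context for a function f : I → {0,1}, the canonical map W_n(κ) → End(M(f)_n), sending c ∈ W_n(κ) to the endomorphism determined by e_τ ↦ W_n(τ)(c) · e_τ, is an injective ring homomorphism whose image is exactly the set of W_n(k)-linear endomorphisms of M(f)_n that commute with F, V and the W_n(κ)-action. In particular, the ring of such endomorphisms of M(f)_n is isomorphic to W_n(κ). -/
section Helpers

namespace TruncatedWittVector

variable {p : ℕ} [Fact p.Prime] {n : ℕ} {R S T : Type*} [CommRing R] [CommRing S] [CommRing T]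

theorem mapRingHom_truncate' (f : R →+* S) (w : WittVector p R) :
    mapRingHom n f (WittVector.truncate n w) = WittVector.truncate n (WittVector.map f w) :=
  RingHom.liftOfRightInverse_comp_apply _ _ _ _ w

theorem coeff_mapRingHom' (f : R →+* S) (x : TruncatedWittVector p n R) (i : Fin n) :
    (mapRingHom n f x).coeff i = f (x.coeff i) := by
  have h : WittVector.truncate n x.out = x := truncateFun_out x
  conv_lhs => rw [← h]
  rw [mapRingHom_truncate', WittVector.coeff_truncate, WittVector.map_coeff, coeff_out]

theorem mapRingHom_comp_apply' (g : S →+* T) (f : R →+* S) (x : TruncatedWittVector p n R) :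
    mapRingHom n (g.comp f) x = mapRingHom n g (mapRingHom n f x) := by
  ext i; simp [coeff_mapRingHom']

theorem mapRingHom_id_apply' (x : TruncatedWittVector p n R) :
    mapRingHom n (RingHom.id R) x = x := by
  ext i; simp [coeff_mapRingHom']

theorem mapRingHom_injective' (f : R →+* S) (hf : Function.Injective f) :
    Function.Injective (mapRingHom (p := p) n f) := by
  intro x y h
  ext i
  apply hf
  rw [← coeff_mapRingHom', ← coeff_mapRingHom', h]

end TruncatedWittVector

theorem my_wittVector_coeff_zero_sub {p : ℕ} [Fact p.Prime] {R : Type*} [CommRing R]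
    (x y : WittVector p R) : (x - y).coeff 0 = x.coeff 0 - y.coeff 0 := by
  have h : ∀ z : WittVector p R, WittVector.ghostComponent 0 z = z.coeff 0 := by
    intro z
    rw [WittVector.ghostComponent_apply, wittPolynomial_zero, MvPolynomial.aeval_X]
  rw [← h, ← h, ← h, map_sub]

theorem my_isUnit_truncate_teich_sub {p : ℕ} [Fact p.Prime] {n : ℕ} {k : Type*} [Field k]
    [CharP k p] (a b : k) (hab : a ≠ b) :
    IsUnit (WittVector.truncate n (WittVector.teichmuller p a - WittVector.teichmuller p b)) := by
  apply IsUnit.map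
  apply WittVector.isUnit_of_coeff_zero_ne_zero
  rw [my_wittVector_coeff_zero_sub, WittVector.teichmuller_coeff_zero,
    WittVector.teichmuller_coeff_zero]
  exact sub_ne_zero_of_ne hab

set_option linter.unusedSectionVars false

section FF
variable {p m : ℕ} [hp : Fact p.Prime] {κ k : Type*} [Field κ] [Fintype κ] [CharP κ p]
  [Field k] [IsAlgClosed k] [CharP k p]

theorem my_hom_ext {g : κˣ} (hg : ∀ x : κˣ, x ∈ Subgroup.zpowers g)
    {τ τ' : κ →+* k} (h : τ (g : κ) = τ' (g : κ)) : τ = τ' := by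
  ext x
  rcases eq_or_ne x 0 with rfl | hx
  · simp
  · obtain ⟨t, ht⟩ := (mem_powers_iff_mem_zpowers.mpr (hg (Units.mk0 x hx)) : _)
    have ht' : g ^ t = Units.mk0 x hx := ht
    have hxg : x = (g : κ) ^ t := by
      rw [← Units.val_pow_eq_pow_val, ht', Units.val_mk0]
    rw [hxg, map_pow, map_pow, h]

theorem my_mem_range_iff (hm : 1 ≤ m) (hcard : Fintype.card κ = p ^ m) (τ : κ →+* k) (x : k) :
    x ∈ Set.range τ ↔ x ^ p ^ m = x := by
  have hq1 : 1 < p ^ m := Nat.one_lt_pow (by omega) hp.out.one_lt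
  classical
  constructor
  · rintro ⟨y, rfl⟩
    rw [← map_pow, ← hcard, FiniteField.pow_card]
  · intro hx
    set P : Polynomial k := Polynomial.X ^ p ^ m - Polynomial.X with hP
    have hP0 : P ≠ 0 := FiniteField.X_pow_card_sub_X_ne_zero k hq1
    have hPdeg : P.natDegree = p ^ m := FiniteField.X_pow_card_sub_X_natDegree_eq k hq1
    have hroot : ∀ z : k, z ^ p ^ m = z → z ∈ P.roots.toFinset := by
      intro z hz
      rw [Multiset.mem_toFinset, Polynomial.mem_roots hP0]
      simp [hP, Polynomial.IsRoot, sub_eq_zero, hz]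
    set A : Finset k := Finset.univ.image (fun y : κ => τ y) with hA
    have hAcard : A.card = p ^ m := by
      rw [hA, Finset.card_image_of_injective _ τ.injective, Finset.card_univ, hcard]
    have hsub : A ⊆ P.roots.toFinset := by
      intro a ha
      rw [hA, Finset.mem_image] at ha
      obtain ⟨y, -, rfl⟩ := ha
      exact hroot _ (by rw [← map_pow, ← hcard, FiniteField.pow_card])
    have hcard2 : P.roots.toFinset.card ≤ A.card := by
      rw [hAcard]
      exact le_trans (Multiset.toFinset_card_le _) (le_trans (Polynomial.card_roots' P) hPdeg.le)
    have hEq : A = P.roots.toFinset := Finset.eq_of_subset_of_card_le hsub hcard2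
    have : x ∈ A := hEq ▸ hroot x hx
    rw [hA, Finset.mem_image] at this
    obtain ⟨y, -, hy⟩ := this
    exact ⟨y, hy⟩

include hp in
theorem my_nonempty_hom : Nonempty (κ →+* k) := by
  letI : Algebra (ZMod p) κ := ZMod.algebra κ p
  letI : Algebra (ZMod p) k := ZMod.algebra k p
  exact ⟨(IsAlgClosed.lift (R := ZMod p) (S := κ) (M := k)).toRingHom⟩

theorem my_finite_hom (hm : 1 ≤ m) (hcard : Fintype.card κ = p ^ m) : Finite (κ →+* k) := by
  set S : Set k := {x : k | x ^ p ^ m = x} with hS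
  have hSfin : S.Finite := by
    have hq1 : 1 < p ^ m := Nat.one_lt_pow (by omega) hp.out.one_lt
    have h0 : (Polynomial.X ^ p ^ m - Polynomial.X : Polynomial k) ≠ 0 :=
      FiniteField.X_pow_card_sub_X_ne_zero k hq1
    refine Set.Finite.subset (Polynomial.finite_setOf_isRoot h0) ?_
    intro x hx
    simp only [Set.mem_setOf_eq, Polynomial.IsRoot, Polynomial.eval_sub, Polynomial.eval_pow,
      Polynomial.eval_X, sub_eq_zero]
    exact hx
  haveI : Finite S := hSfin
  refine Finite.of_injective (fun τ : κ →+* k => fun a : κ =>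
    (⟨τ a, (my_mem_range_iff hm hcard τ (τ a)).mp ⟨a, rfl⟩⟩ : S)) ?_
  intro τ τ' h
  ext a
  exact congrArg Subtype.val (congrFun h a)

theorem my_succ_iterate (τ : κ →+* k) (j : ℕ) (x : κ) :
    ((fun σ : κ →+* k => (frobenius k p).comp σ)^[j] τ) x = τ x ^ p ^ j := by
  induction j with
  | zero => simp
  | succ j ih =>
    rw [Function.iterate_succ_apply', RingHom.comp_apply, ih, frobenius_def, ← pow_mul, pow_succ]

theorem my_succ_iterate_m (hcard : Fintype.card κ = p ^ m) (τ : κ →+* k) :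
    (fun σ : κ →+* k => (frobenius k p).comp σ)^[m] τ = τ := by
  ext x
  rw [my_succ_iterate, ← map_pow, ← hcard, FiniteField.pow_card]

theorem my_classify (hm : 1 ≤ m) (hcard : Fintype.card κ = p ^ m) (τ₀ τ : κ →+* k) :
    ∃ j, τ = (fun σ : κ →+* k => (frobenius k p).comp σ)^[j] τ₀ := by
  classical
  letI : Algebra (ZMod p) κ := ZMod.algebra κ p
  letI : Algebra (ZMod p) k := ZMod.algebra k p
  obtain ⟨g, hg⟩ := IsCyclic.exists_generator (α := κˣ)
  have hfr : Module.finrank (ZMod p) κ = m := by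
    have := Module.card_eq_pow_finrank (K := ZMod p) (V := κ)
    rw [ZMod.card, hcard] at this
    exact (Nat.pow_right_injective hp.out.two_le this.symm)
  have hint : IsIntegral (ZMod p) (g : κ) := IsIntegral.of_finite _ _
  set μ := minpoly (ZMod p) (g : κ) with hμ
  have hμdeg : μ.natDegree ≤ m := le_trans (minpoly.natDegree_le _) hfr.le
  set P := μ.map (algebraMap (ZMod p) k) with hPdef
  have hPdeg : P.natDegree ≤ m := by
    rw [hPdef, (minpoly.monic hint).natDegree_map]
    exact hμdeg
  have hP0 : P ≠ 0 := ((minpoly.monic hint).map _).ne_zero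
  have hcomm : ∀ (σ : κ →+* k) (r : ZMod p),
      σ (algebraMap (ZMod p) κ r) = algebraMap (ZMod p) k r :=
    fun σ r => RingHom.congr_fun
      (RingHom.ext_zmod (σ.comp (algebraMap (ZMod p) κ)) (algebraMap (ZMod p) k)) r
  have haev : ∀ z : k, Polynomial.aeval z μ = 0 → P.IsRoot z := by
    intro z hz
    show P.eval z = 0
    rw [hPdef, Polynomial.eval_map, ← Polynomial.aeval_def]
    exact hz
  have hroot : ∀ σ : κ →+* k, P.IsRoot (σ (g : κ)) := by
    intro σ
    apply haev
    let σa : κ →ₐ[ZMod p] k := ⟨σ, hcomm σ⟩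
    have h1 : Polynomial.aeval (σa (g : κ)) μ = σa (Polynomial.aeval (g : κ) μ) :=
      Polynomial.aeval_algHom_apply σa (g : κ) μ
    rw [minpoly.aeval, map_zero] at h1
    exact h1
  have hcommf : ∀ r : ZMod p,
      frobenius k p (algebraMap (ZMod p) k r) = algebraMap (ZMod p) k r := by
    intro r
    rw [frobenius_def, ← map_pow, ZMod.pow_card]
  have hfrobroot : ∀ j, P.IsRoot (τ₀ (g : κ) ^ p ^ j) := by
    intro j
    induction j with
    | zero => simpa using hroot τ₀
    | succ j ih =>
      let fa : k →ₐ[ZMod p] k := ⟨frobenius k p, hcommf⟩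
      apply haev
      have h1 : Polynomial.aeval (fa (τ₀ (g : κ) ^ p ^ j)) μ
          = fa (Polynomial.aeval (τ₀ (g : κ) ^ p ^ j) μ) :=
        Polynomial.aeval_algHom_apply fa _ μ
      have h2 : Polynomial.aeval (τ₀ (g : κ) ^ p ^ j) μ = 0 := by
        have := ih
        rwa [Polynomial.IsRoot, hPdef, Polynomial.eval_map, ← Polynomial.aeval_def] at this
      have h3 : fa (τ₀ (g : κ) ^ p ^ j) = τ₀ (g : κ) ^ p ^ (j + 1) := by
        show frobenius k p _ = _
        rw [frobenius_def, ← pow_mul, pow_succ]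
      rw [h3] at h1
      rw [h1, h2, map_zero]
  -- order of τ₀ g, working in kˣ
  set u : kˣ := Units.map τ₀.toMonoidHom g with hu
  have huval : (u : k) = τ₀ (g : κ) := rfl
  have hinj : Function.Injective (Units.map τ₀.toMonoidHom) := by
    intro a b hab
    exact Units.ext (τ₀.injective (congrArg Units.val hab))
  have hord : orderOf u = p ^ m - 1 := by
    rw [hu, orderOf_injective (Units.map τ₀.toMonoidHom) hinj g,
      orderOf_eq_card_of_forall_mem_zpowers hg, Nat.card_eq_fintype_card,
      Fintype.card_units, hcard]
  have hq1 : 1 < p ^ m := Nat.one_lt_pow (by omega) hp.out.one_lt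
  -- distinctness
  have hdist : ∀ i < m, ∀ j < m, τ₀ (g : κ) ^ p ^ i = τ₀ (g : κ) ^ p ^ j → i = j := by
    intro i hi j hj hij
    rcases eq_or_lt_of_le hm with h1' | h1'
    · omega
    · have hij' : u ^ p ^ i = u ^ p ^ j := by
        apply Units.ext
        rw [Units.val_pow_eq_pow_val, Units.val_pow_eq_pow_val, huval]
        exact hij
      have hmod : p ^ i ≡ p ^ j [MOD p ^ m - 1] := by
        rw [← hord]; exact (pow_eq_pow_iff_modEq).mp hij'
      have e3 : 2 ≤ p ^ (m - 1) := Nat.one_lt_pow (by omega) hp.out.one_lt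
      have e1 : p ^ (m - 1) * p = p ^ m := by rw [← pow_succ]; congr 1; omega
      have e4 : p ^ (m - 1) * 2 ≤ p ^ (m - 1) * p := Nat.mul_le_mul_left _ hp.out.two_le
      have e5 : p ^ (m - 1) < p ^ m - 1 := by omega
      have e6 : p ^ i ≤ p ^ (m - 1) := Nat.pow_le_pow_right hp.out.pos (by omega)
      have e7 : p ^ j ≤ p ^ (m - 1) := Nat.pow_le_pow_right hp.out.pos (by omega)
      have := Nat.ModEq.eq_of_lt_of_lt hmod (by omega) (by omega)
      exact Nat.pow_right_injective hp.out.two_le this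
  -- counting roots
  set B : Finset k := (Finset.range m).image (fun j => τ₀ (g : κ) ^ p ^ j) with hB
  have hBcard : B.card = m := by
    rw [hB, Finset.card_image_of_injOn, Finset.card_range]
    intro i hi j hj hij
    exact hdist i (Finset.mem_range.mp hi) j (Finset.mem_range.mp hj) hij
  have hBsub : B ⊆ P.roots.toFinset := by
    intro a ha
    rw [hB, Finset.mem_image] at ha
    obtain ⟨j, -, rfl⟩ := ha
    rw [Multiset.mem_toFinset, Polynomial.mem_roots hP0]
    exact hfrobroot j
  have hcard2 : P.roots.toFinset.card ≤ B.card := by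
    rw [hBcard]
    exact le_trans (Multiset.toFinset_card_le _) (le_trans (Polynomial.card_roots' P) hPdeg)
  have hEq : B = P.roots.toFinset := Finset.eq_of_subset_of_card_le hBsub hcard2
  have hτ : τ (g : κ) ∈ B := by
    rw [hEq, Multiset.mem_toFinset, Polynomial.mem_roots hP0]
    exact hroot τ
  rw [hB, Finset.mem_image] at hτ
  obtain ⟨j, -, hj⟩ := hτ
  refine ⟨j, my_hom_ext hg ?_⟩
  rw [my_succ_iterate, hj]
end FF

end Helpers

section Dieudonne

variable (p n : ℕ) [Fact p.Prime] (κ k : Type*) [CommRing κ] [Field k]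
  [CharP k p] [PerfectField k]

/-- The `W_n(κ)`-action on the Dieudonné module `M(f)_n`, i.e. the free
`W_n(k)`-module on the set `I` of ring homomorphisms `κ → k`, determined by
`c • e_τ = W_n(τ)(c) • e_τ`. -/
noncomputable def wittAct (c : TruncatedWittVector p n κ)
    (v : (κ →+* k) → TruncatedWittVector p n k) :
    (κ →+* k) → TruncatedWittVector p n k :=
  fun τ => TruncatedWittVector.mapRingHom n τ c * v τ

/-- The Frobenius `F` of the Dieudonné module `M(f)_n`: the additive,
`σ`-semilinear map determined by `F e_τ = p ^ (f τ) • e_{τ+1}`, where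
`τ + 1 = frobenius ∘ τ` is the successor of `τ`. -/
noncomputable def wittF (f : (κ →+* k) → ℕ)
    (v : (κ →+* k) → TruncatedWittVector p n k) :
    (κ →+* k) → TruncatedWittVector p n k :=
  fun τ =>
    (p : TruncatedWittVector p n k) ^ f ((frobeniusEquiv k p).symm.toRingHom.comp τ) *
      TruncatedWittVector.mapRingHom n (frobenius k p)
        (v ((frobeniusEquiv k p).symm.toRingHom.comp τ))

/-- The Verschiebung `V` of the Dieudonné module `M(f)_n`: the additive,
`σ⁻¹`-semilinear map determined by `V e_{τ+1} = p ^ (1 - f τ) • e_τ`. -/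
noncomputable def wittV (f : (κ →+* k) → ℕ)
    (v : (κ →+* k) → TruncatedWittVector p n k) :
    (κ →+* k) → TruncatedWittVector p n k :=
  fun τ =>
    (p : TruncatedWittVector p n k) ^ (1 - f τ) *
      TruncatedWittVector.mapRingHom n (frobeniusEquiv k p).symm.toRingHom
        (v ((frobenius k p).comp τ))

end Dieudonne

set_option linter.unusedSectionVars false

section Singles

variable (p n : ℕ) [Fact p.Prime] (κ k : Type*) [CommRing κ] [Field k]
  [CharP k p] [PerfectField k]

theorem my_EPhi : ((frobeniusEquiv k p).symm.toRingHom).comp (frobenius k p) = RingHom.id k := by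
  rw [RingEquiv.toRingHom_eq_coe]
  exact frobeniusEquiv_symm_comp_frobenius k p

theorem my_PhiE : (frobenius k p).comp (frobeniusEquiv k p).symm.toRingHom = RingHom.id k := by
  rw [RingEquiv.toRingHom_eq_coe]
  exact frobenius_comp_frobeniusEquiv_symm k p

variable {κ k}

theorem my_comp_EPhi (τ : κ →+* k) :
    (frobeniusEquiv k p).symm.toRingHom.comp ((frobenius k p).comp τ) = τ := by
  rw [← RingHom.comp_assoc, my_EPhi, RingHom.id_comp]

theorem my_comp_PhiE (τ : κ →+* k) :
    (frobenius k p).comp ((frobeniusEquiv k p).symm.toRingHom.comp τ) = τ := by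
  rw [← RingHom.comp_assoc, my_PhiE, RingHom.id_comp]

variable [DecidableEq (κ →+* k)]

theorem my_single_eq_smul (τ : κ →+* k) (x : TruncatedWittVector p n k) :
    Pi.single τ x = x • (Pi.single τ 1 : (κ →+* k) → TruncatedWittVector p n k) := by
  funext ρ
  rcases eq_or_ne ρ τ with rfl | h
  · simp [Pi.single_eq_same, smul_eq_mul]
  · simp [Pi.single_eq_of_ne h, smul_eq_mul]

theorem my_act_single (c : TruncatedWittVector p n κ) (τ : κ →+* k)
    (x : TruncatedWittVector p n k) :
    wittAct p n κ k c (Pi.single τ x)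
      = Pi.single τ (TruncatedWittVector.mapRingHom n τ c * x) := by
  funext ρ
  rcases eq_or_ne ρ τ with rfl | h
  · simp [wittAct, Pi.single_eq_same]
  · simp [wittAct, Pi.single_eq_of_ne h]

theorem my_F_single (f : (κ →+* k) → ℕ) (τ : κ →+* k) (x : TruncatedWittVector p n k) :
    wittF p n κ k f (Pi.single τ x)
      = Pi.single ((frobenius k p).comp τ)
          ((p : TruncatedWittVector p n k) ^ f τ
            * TruncatedWittVector.mapRingHom n (frobenius k p) x) := by
  funext ρ
  rcases eq_or_ne ρ ((frobenius k p).comp τ) with rfl | h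
  · rw [Pi.single_eq_same]
    show (p : TruncatedWittVector p n k) ^ f _ * _ = _
    rw [my_comp_EPhi, Pi.single_eq_same]
  · rw [Pi.single_eq_of_ne h]
    show (p : TruncatedWittVector p n k) ^ f _ * _ = 0
    have hne : (frobeniusEquiv k p).symm.toRingHom.comp ρ ≠ τ := by
      intro hEq
      apply h
      rw [← hEq, my_comp_PhiE]
    rw [Pi.single_eq_of_ne hne, map_zero, mul_zero]

theorem my_V_single (f : (κ →+* k) → ℕ) (τ : κ →+* k) (x : TruncatedWittVector p n k) :
    wittV p n κ k f (Pi.single ((frobenius k p).comp τ) x)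
      = Pi.single τ ((p : TruncatedWittVector p n k) ^ (1 - f τ)
          * TruncatedWittVector.mapRingHom n (frobeniusEquiv k p).symm.toRingHom x) := by
  funext ρ
  rcases eq_or_ne ρ τ with rfl | h
  · rw [Pi.single_eq_same]
    show (p : TruncatedWittVector p n k) ^ (1 - f ρ) * _ = _
    rw [Pi.single_eq_same]
  · rw [Pi.single_eq_of_ne h]
    show (p : TruncatedWittVector p n k) ^ (1 - f ρ) * _ = 0
    have hne : (frobenius k p).comp ρ ≠ (frobenius k p).comp τ := by
      intro hEq
      apply h
      have := congrArg ((frobeniusEquiv k p).symm.toRingHom.comp) hEq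
      rwa [my_comp_EPhi, my_comp_EPhi] at this
    rw [Pi.single_eq_of_ne hne, map_zero, mul_zero]

end Singles

/-- Lemma 3.3 of the paper, at the level of Dieudonné modules: for
`κ = 𝔽_{p^m}` and `k` algebraically closed of characteristic `p`, the
canonical map `W_n(κ) → End(M(f)_n)`, `c ↦ (e_τ ↦ W_n(τ)(c) · e_τ)`, is an
injective ring homomorphism whose image is exactly the set of
`W_n(k)`-linear endomorphisms of `M(f)_n` commuting with `F`, `V` and the
`W_n(κ)`-action. -/
theorem stmt5 (p m n : ℕ) [Fact p.Prime] (hm : 1 ≤ m) (hn : 1 ≤ n)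
    (κ k : Type*) [Field κ] [Fintype κ] [CharP κ p]
    (hcard : Fintype.card κ = p ^ m)
    [Field k] [IsAlgClosed k] [CharP k p]
    (f : (κ →+* k) → ℕ) (hf : ∀ τ, f τ ≤ 1) :
    (∀ v, wittAct p n κ k 1 v = v) ∧
    (∀ c d v, wittAct p n κ k (c + d) v = wittAct p n κ k c v + wittAct p n κ k d v) ∧
    (∀ c d v, wittAct p n κ k (c * d) v = wittAct p n κ k c (wittAct p n κ k d v)) ∧
    Function.Injective (fun c : TruncatedWittVector p n κ => wittAct p n κ k c) ∧
    Set.range (fun c : TruncatedWittVector p n κ => wittAct p n κ k c) =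
      {ψ : ((κ →+* k) → TruncatedWittVector p n k) →
          ((κ →+* k) → TruncatedWittVector p n k) |
        IsLinearMap (TruncatedWittVector p n k) ψ ∧
        ψ ∘ wittF p n κ k f = wittF p n κ k f ∘ ψ ∧
        ψ ∘ wittV p n κ k f = wittV p n κ k f ∘ ψ ∧
        ∀ c, ψ ∘ wittAct p n κ k c = wittAct p n κ k c ∘ ψ} := by
  classical
  obtain ⟨τ₀⟩ : Nonempty (κ →+* k) := my_nonempty_hom (p := p) (κ := κ) (k := k)
  haveI : Finite (κ →+* k) := my_finite_hom hm hcard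
  haveI : Fintype (κ →+* k) := Fintype.ofFinite _
  -- separation of embeddings by units
  have hsep : ∀ τ τ' : κ →+* k, τ ≠ τ' → ∃ c : TruncatedWittVector p n κ,
      IsUnit (TruncatedWittVector.mapRingHom n τ c - TruncatedWittVector.mapRingHom n τ' c) := by
    intro τ τ' hne
    have hg : ∃ g : κ, τ g ≠ τ' g := by
      by_contra hcon
      push_neg at hcon
      exact hne (RingHom.ext hcon)
    obtain ⟨g, hg⟩ := hg
    refine ⟨WittVector.truncate n (WittVector.teichmuller p g), ?_⟩
    rw [TruncatedWittVector.mapRingHom_truncate', TruncatedWittVector.mapRingHom_truncate',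
      WittVector.map_teichmuller, WittVector.map_teichmuller, ← map_sub]
    exact my_isUnit_truncate_teich_sub _ _ hg
  refine ⟨?_, ?_, ?_, ?_, ?_⟩
  · intro v; funext τ; simp [wittAct]
  · intro c d v; funext τ; simp [wittAct]; ring
  · intro c d v; funext τ; simp [wittAct]; ring
  · intro c d h
    simp only at h
    have h1 : wittAct p n κ k c (fun _ => 1) τ₀ = wittAct p n κ k d (fun _ => 1) τ₀ := by rw [h]
    simp only [wittAct, mul_one] at h1
    exact TruncatedWittVector.mapRingHom_injective' τ₀ τ₀.injective h1
  · ext ψ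
    simp only [Set.mem_range, Set.mem_setOf_eq]
    constructor
    · rintro ⟨c, rfl⟩
      refine ⟨⟨?_, ?_⟩, ?_, ?_, ?_⟩
      · intro v w; funext τ
        simp only [wittAct, Pi.add_apply]
        ring
      · intro r v; funext τ
        simp only [wittAct, Pi.smul_apply, smul_eq_mul]
        ring
      · funext v τ
        simp only [Function.comp_apply, wittAct, wittF, map_mul]
        rw [← TruncatedWittVector.mapRingHom_comp_apply', my_comp_PhiE]
        ring
      · funext v τ
        simp only [Function.comp_apply, wittAct, wittV, map_mul]
        rw [← TruncatedWittVector.mapRingHom_comp_apply', my_comp_EPhi]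
        ring
      · intro d
        funext v τ
        simp only [Function.comp_apply, wittAct]
        ring
    · rintro ⟨hlin, hF, hV, hact⟩
      set a : (κ →+* k) → TruncatedWittVector p n k :=
        fun τ => ψ (Pi.single τ 1) τ with ha
      -- off diagonal vanishing
      have hoff : ∀ τ ρ : κ →+* k, ρ ≠ τ → ψ (Pi.single τ 1) ρ = 0 := by
        intro τ ρ hne
        obtain ⟨c, hcu⟩ := hsep τ ρ (Ne.symm hne)
        have h1 := congrFun (congrFun (hact c) (Pi.single τ 1)) ρ
        simp only [Function.comp_apply] at h1
        rw [my_act_single, mul_one, my_single_eq_smul, hlin.map_smul] at h1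
        simp only [Pi.smul_apply, smul_eq_mul, wittAct] at h1
        have h2 : (TruncatedWittVector.mapRingHom n τ c
            - TruncatedWittVector.mapRingHom n ρ c) * ψ (Pi.single τ 1) ρ = 0 := by
          rw [sub_mul, h1, sub_self]
        rwa [IsUnit.mul_right_eq_zero hcu] at h2
      have hsingle : ∀ τ : κ →+* k, ψ (Pi.single τ 1) = Pi.single τ (a τ) := by
        intro τ
        funext ρ
        rcases eq_or_ne ρ τ with rfl | h
        · rw [Pi.single_eq_same, ha]
        · rw [Pi.single_eq_of_ne h, hoff τ ρ h]
      -- diagonal twisted-equivariance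
      have hkey : ∀ τ : κ →+* k, a ((frobenius k p).comp τ) = TruncatedWittVector.mapRingHom n (frobenius k p) (a τ) := by
        intro τ
        have hFc := congrFun (congrFun hF (Pi.single τ 1)) ((frobenius k p).comp τ)
        simp only [Function.comp_apply] at hFc
        rw [my_F_single, map_one, mul_one, my_single_eq_smul, hlin.map_smul] at hFc
        simp only [Pi.smul_apply, smul_eq_mul] at hFc
        have hFc2 : (p : TruncatedWittVector p n k) ^ f τ * a ((frobenius k p).comp τ) = (p : TruncatedWittVector p n k) ^ f τ * TruncatedWittVector.mapRingHom n (frobenius k p) (a τ) := by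
          rw [hFc]
          show (p : TruncatedWittVector p n k) ^ f _ * TruncatedWittVector.mapRingHom n (frobenius k p) (ψ (Pi.single τ 1) _) = _
          rw [my_comp_EPhi]
        have hVc := congrFun (congrFun hV (Pi.single ((frobenius k p).comp τ) 1)) τ
        simp only [Function.comp_apply] at hVc
        rw [my_V_single, map_one, mul_one, my_single_eq_smul, hlin.map_smul] at hVc
        simp only [Pi.smul_apply, smul_eq_mul] at hVc
        have hVc2 : (p : TruncatedWittVector p n k) ^ (1 - f τ) * a τ
            = (p : TruncatedWittVector p n k) ^ (1 - f τ)
              * TruncatedWittVector.mapRingHom n (frobeniusEquiv k p).symm.toRingHom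
                  (a ((frobenius k p).comp τ)) := by
          rw [hVc]
          show (p : TruncatedWittVector p n k) ^ (1 - f τ) * TruncatedWittVector.mapRingHom n _ (ψ _ _) = _
          rfl
        have hVc3 : (p : TruncatedWittVector p n k) ^ (1 - f τ) * TruncatedWittVector.mapRingHom n (frobenius k p) (a τ) = (p : TruncatedWittVector p n k) ^ (1 - f τ) * a ((frobenius k p).comp τ) := by
          have := congrArg (TruncatedWittVector.mapRingHom n (frobenius k p)) hVc2
          rw [map_mul, map_mul, map_pow, map_natCast, ← TruncatedWittVector.mapRingHom_comp_apply',
            my_PhiE, TruncatedWittVector.mapRingHom_id_apply'] at this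
          exact this
        rcases Nat.le_one_iff_eq_zero_or_eq_one.mp (hf τ) with h0 | h1
        · rw [h0, pow_zero, one_mul, one_mul] at hFc2
          exact hFc2
        · rw [h1, Nat.sub_self, pow_zero, one_mul, one_mul] at hVc3
          exact hVc3.symm
      -- iterate the relation coefficientwise
      have hcoeff : ∀ (j : ℕ) (τ : κ →+* k) (i : Fin n),
          (a ((fun σ : κ →+* k => (frobenius k p).comp σ)^[j] τ)).coeff i = ((a τ).coeff i) ^ p ^ j := by
        intro j
        induction j with
        | zero => intro τ i; simp
        | succ j ih =>
          intro τ i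
          rw [Function.iterate_succ_apply', hkey, TruncatedWittVector.coeff_mapRingHom', ih,
            frobenius_def, ← pow_mul, pow_succ]
      -- fixed point property of a τ₀
      have hfix : ∀ i : Fin n, ((a τ₀).coeff i) ^ p ^ m = (a τ₀).coeff i := by
        intro i
        have := hcoeff m τ₀ i
        rw [my_succ_iterate_m hcard] at this
        exact this.symm
      -- construct c
      set c : TruncatedWittVector p n κ := TruncatedWittVector.mk p
        (fun i => Classical.choose
          ((my_mem_range_iff hm hcard τ₀ ((a τ₀).coeff i)).mpr (hfix i))) with hc
      have hc0 : TruncatedWittVector.mapRingHom n τ₀ c = a τ₀ := by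
        ext i
        rw [TruncatedWittVector.coeff_mapRingHom', hc, TruncatedWittVector.coeff_mk]
        exact Classical.choose_spec
          ((my_mem_range_iff hm hcard τ₀ ((a τ₀).coeff i)).mpr (hfix i))
      have hmap : ∀ τ : κ →+* k, a τ = TruncatedWittVector.mapRingHom n τ c := by
        intro τ
        obtain ⟨j, rfl⟩ := my_classify hm hcard τ₀ τ
        ext i
        rw [hcoeff j τ₀ i, TruncatedWittVector.coeff_mapRingHom', my_succ_iterate,
          ← TruncatedWittVector.coeff_mapRingHom', hc0]
      refine ⟨c, ?_⟩
      show wittAct p n κ k c = ψ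
      funext v ρ
      have hv : v = ∑ τ : κ →+* k, Pi.single τ (v τ) := (Finset.univ_sum_single v).symm
      have hψv : ψ v = ∑ τ : κ →+* k, Pi.single τ (v τ * a τ) := by
        conv_lhs => rw [hv]
        have : ψ (∑ τ : κ →+* k, Pi.single τ (v τ))
            = ∑ τ : κ →+* k, ψ (Pi.single τ (v τ)) :=
          map_sum (IsLinearMap.mk' ψ hlin) _ _
        rw [this]
        refine Finset.sum_congr rfl fun τ _ => ?_
        rw [my_single_eq_smul, hlin.map_smul, hsingle]
        funext σ
        rcases eq_or_ne σ τ with rfl | h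
        · simp [Pi.single_eq_same, smul_eq_mul]
        · simp [Pi.single_eq_of_ne h]
      have h2 : (∑ τ : κ →+* k, Pi.single τ (v τ * a τ)) = fun ρ => v ρ * a ρ := by
        have := Finset.univ_sum_single (fun τ : κ →+* k => v τ * a τ)
        exact this
      show TruncatedWittVector.mapRingHom n ρ c * v ρ = ψ v ρ
      rw [hψv, h2, ← hmap]
      ring
end

section
/- Let M and N be abelian groups, R a commutative ring, and β : M × N → R a biadditive map. Define the Heisenberg group H(β) to be the set M × N × R with multiplication (x, z, c)·(x′, z′, c′) = (x + x′, z + z′, c + c′ + β(x, z′)); this operation makes H(β) a group with identity (0,0,0). If S is a subgroup of H(β) such that the projection H(β) → M, (x, z, c) ↦ x, is injective on S, then β(x, z′) = β(x′, z) for all elements (x, z, c) and (x′, z′, c′) of S. -/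
/-- The Heisenberg group `H(β)` associated to a biadditive map
`β : M × N → R`: the underlying set is `M × N × R` with multiplication
`(x, z, c) · (x', z', c') = (x + x', z + z', c + c' + β x z')`. -/
@[ext]
structure Heisenberg (M N R : Type*) [AddCommGroup M] [AddCommGroup N]
    [CommRing R] (β : M →+ N →+ R) where
  x : M
  z : N
  c : R

namespace Heisenberg

variable {M N R : Type*} [AddCommGroup M] [AddCommGroup N] [CommRing R]
  {β : M →+ N →+ R}

instance : Mul (Heisenberg M N R β) :=
  ⟨fun a b => ⟨a.x + b.x, a.z + b.z, a.c + b.c + β a.x b.z⟩⟩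

instance : One (Heisenberg M N R β) := ⟨⟨0, 0, 0⟩⟩

instance : Inv (Heisenberg M N R β) :=
  ⟨fun a => ⟨-a.x, -a.z, -a.c + β a.x a.z⟩⟩

@[simp] theorem mul_x (a b : Heisenberg M N R β) : (a * b).x = a.x + b.x := rfl
@[simp] theorem mul_z (a b : Heisenberg M N R β) : (a * b).z = a.z + b.z := rfl
@[simp] theorem mul_c (a b : Heisenberg M N R β) :
    (a * b).c = a.c + b.c + β a.x b.z := rfl
@[simp] theorem one_x : (1 : Heisenberg M N R β).x = 0 := rfl
@[simp] theorem one_z : (1 : Heisenberg M N R β).z = 0 := rfl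
@[simp] theorem one_c : (1 : Heisenberg M N R β).c = 0 := rfl
@[simp] theorem inv_x (a : Heisenberg M N R β) : a⁻¹.x = -a.x := rfl
@[simp] theorem inv_z (a : Heisenberg M N R β) : a⁻¹.z = -a.z := rfl
@[simp] theorem inv_c (a : Heisenberg M N R β) : a⁻¹.c = -a.c + β a.x a.z := rfl

instance instGroup : Group (Heisenberg M N R β) where
  mul_assoc a b c := by
    ext <;> (simp [map_add, AddMonoidHom.add_apply]; try abel)
  one_mul a := by ext <;> simp
  mul_one a := by ext <;> simp
  inv_mul_cancel a := by
    ext <;> (simp [map_neg, AddMonoidHom.neg_apply]; try abel)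

end Heisenberg

/-- Let `M`, `N` be abelian groups, `R` a commutative ring, `β : M × N → R` a
biadditive map, and `H(β)` the associated Heisenberg group.  If `S` is a
subgroup of `H(β)` on which the projection `(x, z, c) ↦ x` is injective, then
`β x z' = β x' z` for all `(x, z, c)` and `(x', z', c')` in `S`. -/
theorem stmt11 {M N R : Type*} [AddCommGroup M] [AddCommGroup N] [CommRing R]
    (β : M →+ N →+ R) (S : Subgroup (Heisenberg M N R β))
    (hinj : Set.InjOn (fun a : Heisenberg M N R β => a.x)
      (S : Set (Heisenberg M N R β))) :
    ∀ a ∈ S, ∀ b ∈ S, β a.x b.z = β b.x a.z := by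
  intro a ha b hb
  have h : a * b = b * a := hinj (S.mul_mem ha hb) (S.mul_mem hb ha) (by simp [add_comm])
  have hc := congrArg Heisenberg.c h
  simp only [Heisenberg.mul_c] at hc
  linear_combination hc
end
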